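/- Embed the upper half-plane in ℍ³ as ℍ²₀ = {x + y·j : x ∈ ℝ, y > 0}, and let F = {z ∈ ℍ³ : x(z) ∈ convexHull{1, 2, 1+i} and ‖x(z) − 1‖² + y(z)² ≥ 2}. Let γ₀ = [[i, −2i],[0, −i]] ∈ SL(2,ℂ) (the conjugate T₁·diag(i,−i)·T₁⁻¹ with T₁ = [[1,1],[0,1]]). Then {x + y·j : 0 ≤ x ≤ 2, (x − 1)² + y² ≥ 2} = (F ∪ γ₀·F) ∩ ℍ²₀. -/

import Mathlib

noncomputable section
open Matrix Complex

abbrev M2 := Matrix (Fin 2) (Fin 2) ℂ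
abbrev M3 := Matrix (Fin 3) (Fin 3) ℂ

/-- The explicit coordinate expression of the conjugation morphism `c`. -/
def cmap (g : M2) : M3 :=
  !![(g 0 0 ^ 2 - g 1 0 ^ 2 + g 1 1 ^ 2 - g 0 1 ^ 2) / 2,
       Complex.I * (g 0 0 ^ 2 - g 1 0 ^ 2 + g 0 1 ^ 2 - g 1 1 ^ 2) / 2,
       g 1 0 * g 1 1 - g 0 0 * g 0 1;
     Complex.I * (g 0 1 ^ 2 + g 1 1 ^ 2 - g 0 0 ^ 2 - g 1 0 ^ 2) / 2,
       (g 0 0 ^ 2 + g 1 0 ^ 2 + g 0 1 ^ 2 + g 1 1 ^ 2) / 2,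
       Complex.I * (g 0 0 * g 0 1 + g 1 0 * g 1 1);
     -(g 0 0 * g 1 0) + g 0 1 * g 1 1,
       Complex.I * (g 0 0 * g 1 0 + g 0 1 * g 1 1),
       g 0 0 * g 1 1 + g 0 1 * g 1 0]

/-- `z` is a Gaussian integer. -/
def IsGI (z : ℂ) : Prop := ∃ a b : ℤ, z = (a : ℂ) + (b : ℂ) * Complex.I

/-- `SO(3,ℂ)`: complex orthogonal matrices of determinant one. -/
def SO3C : Set M3 := {M | Mᵀ * M = 1 ∧ M.det = 1}

/-- `SO(3,ℤ[i])`: elements of `SO(3,ℂ)` with Gaussian-integer entries. -/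
def SO3ZI : Set M3 := {M | M ∈ SO3C ∧ ∀ i j, IsGI (M i j)}

/-- `Γ* = c⁻¹(SO(3,ℤ[i]))` inside `SL(2,ℂ)`. -/
def GammaStar : Set M2 := {g | g.det = 1 ∧ cmap g ∈ SO3ZI}

/-- Embedding of `ℂ` into the quaternions. -/
def qc (z : ℂ) : Quaternion ℝ := ⟨z.re, z.im, 0, 0⟩

/-- The quaternion `x + y·j` attached to the point `(x, y) ∈ ℂ × ℝ`. -/
def pt (p : ℂ × ℝ) : Quaternion ℝ := ⟨p.1.re, p.1.im, p.2, 0⟩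

/-- The upper half-space model `ℍ³`, as pairs `(x, y) ∈ ℂ × ℝ` with `y > 0`. -/
def H3 : Set (ℂ × ℝ) := {p | 0 < p.2}

/-- Action of `SL(2,ℂ)` on `ℍ³` by fractional linear transformations
`g·z = (az + b)(cz + d)⁻¹` (quaternion multiplication), in the coordinates
`z = (x(z), y(z))`. -/
def act3 (g : M2) (p : ℂ × ℝ) : ℂ × ℝ :=
  let q := (qc (g 0 0) * pt p + qc (g 0 1)) * (qc (g 1 0) * pt p + qc (g 1 1))⁻¹
  (⟨q.re, q.imI⟩, q.imJ)

/-- The good Grenier fundamental domain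
`F = {z ∈ ℍ³ : x(z) ∈ convexHull{1,2,1+i}, ‖x(z)−1‖² + y(z)² ≥ 2}` for `Γ*`. -/
def Fdom : Set (ℂ × ℝ) :=
  {p | p ∈ H3 ∧ p.1 ∈ convexHull ℝ ({1, 2, 1 + Complex.I} : Set ℂ) ∧
    2 ≤ Complex.normSq (p.1 - 1) + p.2 ^ 2}

/-- The upper half-plane `ℍ²₀ = {x + y·j : x ∈ ℝ, y > 0}` embedded in `ℍ³`. -/
def H20 : Set (ℂ × ℝ) := {p | p.1.im = 0 ∧ 0 < p.2}

/-- `γ₀ = T₁·diag(i,−i)·T₁⁻¹ = [[i, −2i],[0, −i]]`. -/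
def gamma0 : M2 := !![Complex.I, -2 * Complex.I; 0, -Complex.I]


lemma inv_qc : (qc (-Complex.I))⁻¹ = qc Complex.I := by
  apply inv_eq_of_mul_eq_one_right
  ext <;> simp [Quaternion.re_mul, Quaternion.imI_mul, Quaternion.imJ_mul, Quaternion.imK_mul] <;>
    simp [qc, Quaternion.re_one, Quaternion.imI_one, Quaternion.imJ_one, Quaternion.imK_one]

lemma act3_gamma0 (p : ℂ × ℝ) : act3 gamma0 p = (2 - p.1, p.2) := by
  have h00 : gamma0 0 0 = Complex.I := rfl
  have h01 : gamma0 0 1 = -2 * Complex.I := rfl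
  have h10 : gamma0 1 0 = 0 := rfl
  have h11 : gamma0 1 1 = -Complex.I := rfl
  have hq0 : qc 0 = 0 := by ext <;> simp [qc] <;> rfl
  simp only [act3, h00, h01, h10, h11, hq0, zero_mul, zero_add, inv_qc]
  refine Prod.ext ?_ ?_
  · apply Complex.ext <;>
      simp [Quaternion.re_mul, Quaternion.imI_mul, Quaternion.imJ_mul,
        Quaternion.imK_mul, Quaternion.re_add, Quaternion.imI_add, Quaternion.imJ_add,
        Quaternion.imK_add] <;> simp [qc, pt] <;> ring
  · simp [Quaternion.re_mul, Quaternion.imI_mul, Quaternion.imJ_mul,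
      Quaternion.imK_mul, Quaternion.re_add, Quaternion.imI_add, Quaternion.imJ_add,
      Quaternion.imK_add] <;> simp [qc, pt]

lemma hull_sub : convexHull ℝ ({1, 2, 1 + Complex.I} : Set ℂ) ⊆
    {z : ℂ | 1 ≤ z.re ∧ z.re ≤ 2 ∧ 0 ≤ z.im} := by
  apply convexHull_min
  · rintro z (rfl | rfl | rfl) <;> norm_num
  · have : {z : ℂ | 1 ≤ z.re ∧ z.re ≤ 2 ∧ 0 ≤ z.im} =
        {z : ℂ | 1 ≤ z.re} ∩ ({z : ℂ | z.re ≤ 2} ∩ {z : ℂ | 0 ≤ z.im}) := by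
      ext z; simp [Set.mem_inter_iff, and_assoc]
    rw [this]
    exact (convex_halfSpace_re_ge 1).inter
      ((convex_halfSpace_re_le 2).inter (convex_halfSpace_im_ge 0))

lemma mem_hull (z : ℂ) (him : z.im = 0) (h1 : 1 ≤ z.re) (h2 : z.re ≤ 2) :
    z ∈ convexHull ℝ ({1, 2, 1 + Complex.I} : Set ℂ) := by
  have m1 : (1:ℂ) ∈ ({1, 2, 1 + Complex.I} : Set ℂ) := by left; rfl
  have m2 : (2:ℂ) ∈ ({1, 2, 1 + Complex.I} : Set ℂ) := by right; left; rfl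
  apply segment_subset_convexHull m1 m2
  have hz : z = (z.re : ℂ) := by apply Complex.ext <;> simp [him]
  refine ⟨2 - z.re, z.re - 1, by linarith, by linarith, by ring, ?_⟩
  rw [Complex.real_smul, Complex.real_smul, hz]; push_cast [Complex.ofReal_re]; ring

lemma img_eq : act3 gamma0 '' Fdom = {p : ℂ × ℝ | (2 - p.1, p.2) ∈ Fdom} := by
  ext p
  constructor
  · rintro ⟨q, hq, rfl⟩
    rw [act3_gamma0]
    simpa using hq
  · intro hp
    exact ⟨(2 - p.1, p.2), hp, by rw [act3_gamma0]; simp⟩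


/-- `{x + y·j : 0 ≤ x ≤ 2, (x−1)² + y² ≥ 2} = (F ∪ γ₀·F) ∩ ℍ²₀`. -/
theorem stmt19 :
    {p : ℂ × ℝ | p.1.im = 0 ∧ 0 < p.2 ∧ 0 ≤ p.1.re ∧ p.1.re ≤ 2 ∧
        2 ≤ (p.1.re - 1) ^ 2 + p.2 ^ 2} =
      (Fdom ∪ act3 gamma0 '' Fdom) ∩ H20 := by
  ext p
  rw [img_eq]
  simp only [Set.mem_setOf_eq, Set.mem_inter_iff, Set.mem_union, H20, Fdom, H3,
    Set.mem_setOf_eq]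
  have h2re : (2:ℂ).re = 2 := by norm_num
  have h2im : (2:ℂ).im = 0 := by norm_num
  constructor
  · rintro ⟨him, hy, h0, h2, hge⟩
    refine ⟨?_, him, hy⟩
    rcases le_total 1 p.1.re with h | h
    · left
      refine ⟨hy, mem_hull p.1 him h h2, ?_⟩
      rw [Complex.normSq_apply]
      simp only [Complex.sub_re, Complex.sub_im, Complex.one_re, Complex.one_im, him]
      nlinarith
    · right
      refine ⟨hy, mem_hull _ (by simp [him]) (by simp; linarith) (by simp; linarith), ?_⟩
      rw [Complex.normSq_apply]
      simp only [Complex.sub_re, Complex.sub_im, Complex.one_re, Complex.one_im, him, h2re, h2im]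
      nlinarith
  · rintro ⟨h, him, hy⟩
    rcases h with ⟨-, hin, hge⟩ | ⟨-, hin, hge⟩
    · obtain ⟨ha, hb, -⟩ := hull_sub hin
      rw [Complex.normSq_apply] at hge
      simp only [Complex.sub_re, Complex.sub_im, Complex.one_re, Complex.one_im, him] at hge
      exact ⟨him, hy, by linarith, hb, by nlinarith⟩
    · obtain ⟨ha, hb, -⟩ := hull_sub hin
      simp only [Complex.sub_re, Complex.sub_im, h2re] at ha hb
      rw [Complex.normSq_apply] at hge
      simp only [Complex.sub_re, Complex.sub_im, Complex.one_re, Complex.one_im, him,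
        h2re, h2im] at hge
      exact ⟨him, hy, by linarith, by linarith, by nlinarith⟩
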